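/- If a sequence of nonnegative reals a_n in [0,1] satisfies the recurrence a_{n+1} = sqrt(1 - a_n^2) - a_{n-1} and is 4-periodic, then a_1 = a_3 and a_2 = a_4. -/
import Mathlib


theorem stmt_0 (a : ℤ → ℝ)
    (hbound : ∀ i, 0 ≤ a i ∧ a i ≤ 1)
    (hrec : ∀ i, a (i + 1) = Real.sqrt (1 - (a i) ^ 2) - a (i - 1))
    (hper : ∀ i, a (i + 4) = a i) :
    a 1 = a 3 ∧ a 2 = a 4 := by
  have h04 : a 4 = a 0 := hper 0
  have h15 : a 5 = a 1 := hper 1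
  have h1 := hrec 1
  have h2 := hrec 2
  have h3 := hrec 3
  have h4 := hrec 4
  norm_num at h1 h2 h3 h4
  have b1 := hbound 1
  have b2 := hbound 2
  have b3 := hbound 3
  have b4 := hbound 4
  have n1 : (0:ℝ) ≤ 1 - (a 1)^2 := by nlinarith [b1.1, b1.2]
  have n2 : (0:ℝ) ≤ 1 - (a 2)^2 := by nlinarith [b2.1, b2.2]
  have n3 : (0:ℝ) ≤ 1 - (a 3)^2 := by nlinarith [b3.1, b3.2]
  have n4 : (0:ℝ) ≤ 1 - (a 4)^2 := by nlinarith [b4.1, b4.2]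
  -- from h1 and h3: sqrt(1-a1^2) = a2 + a0 = a2 + a4 = sqrt(1-a3^2)
  have e13 : Real.sqrt (1 - (a 1)^2) = Real.sqrt (1 - (a 3)^2) := by
    have : a 2 + a 0 = a 4 + a 2 := by rw [h04]; ring
    linarith [h1, h3]
  have e24 : Real.sqrt (1 - (a 2)^2) = Real.sqrt (1 - (a 4)^2) := by
    linarith [h2, h4, h15]
  have q13 : 1 - (a 1)^2 = 1 - (a 3)^2 := (Real.sqrt_inj n1 n3).mp e13
  have q24 : 1 - (a 2)^2 = 1 - (a 4)^2 := (Real.sqrt_inj n2 n4).mp e24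
  constructor
  · nlinarith [b1.1, b3.1]
  · nlinarith [b2.1, b4.1]
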